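/- Suppose q_m > 0, and let f_∞ ∈ ℝ^m be given by f_∞^s = Q_s / (Σ_{s'=1}^m Q_{s'}). Then for every vector f_0 ∈ ℝ^m with nonnegative entries summing to 1, the iterates A^t f_0 converge to f_∞ as t → ∞; i.e., the stationary distribution is a global attractor of the dynamics f_{t+1} = A f_t on the simplex. -/

import Mathlib

/-- The transition matrix of the exogenous innovation–imitation model
(0-indexed: level `i : Fin m` corresponds to productivity level `i+1`). -/
def transMatrix (m : ℕ) (a : ℝ) (q : Fin m → ℝ) : Matrix (Fin m) (Fin m) ℝ :=
  fun i j =>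
    (if (j : ℕ) = 0 then q i * (1 - a) else 0) +
    (if i = j then a else 0) +
    (if (j : ℕ) = (i : ℕ) + 1 then 1 - a else 0)

/-- `Q_s = q_s + q_{s+1} + ⋯ + q_m` (0-indexed). -/
def tailQ (m : ℕ) (q : Fin m → ℝ) (s : Fin m) : ℝ := ∑ j ∈ Finset.Ici s, q j


section Aux
variable {m : ℕ}

/-- ℓ¹ bound for nonneg matrices with column sums ≤ s. -/
lemma l1_mulVec_le (B : Matrix (Fin m) (Fin m) ℝ) (s : ℝ)
    (hB : ∀ i j, 0 ≤ B i j) (hcol : ∀ j, ∑ i, B i j ≤ s) (v : Fin m → ℝ) :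
    ∑ i, |B.mulVec v i| ≤ s * ∑ j, |v j| := by
  calc ∑ i, |B.mulVec v i| ≤ ∑ i, ∑ j, B i j * |v j| := by
        refine Finset.sum_le_sum fun i _ => ?_
        calc |B.mulVec v i| ≤ ∑ j, |B i j * v j| := by
              simp only [Matrix.mulVec, dotProduct]
              exact Finset.abs_sum_le_sum_abs _ _
          _ = ∑ j, B i j * |v j| := by
            refine Finset.sum_congr rfl fun j _ => ?_
            rw [abs_mul, abs_of_nonneg (hB i j)]
    _ = ∑ j, (∑ i, B i j) * |v j| := by rw [Finset.sum_comm]; simp [Finset.sum_mul]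
    _ ≤ ∑ j, s * |v j| := Finset.sum_le_sum fun j _ =>
        mul_le_mul_of_nonneg_right (hcol j) (abs_nonneg _)
    _ = s * ∑ j, |v j| := by rw [Finset.mul_sum]

lemma colsum_mulVec (B : Matrix (Fin m) (Fin m) ℝ) (hcol : ∀ j, ∑ i, B i j = 1)
    (v : Fin m → ℝ) : ∑ i, B.mulVec v i = ∑ j, v j := by
  simp only [Matrix.mulVec, dotProduct]
  rw [Finset.sum_comm]
  refine Finset.sum_congr rfl fun j _ => ?_
  rw [← Finset.sum_mul, hcol j, one_mul]

/-- Doeblin contraction: if additionally some row is ≥ δ and v sums to 0. -/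
lemma doeblin (B : Matrix (Fin m) (Fin m) ℝ) (δ : ℝ) (i₀ : Fin m)
    (hB : ∀ i j, 0 ≤ B i j) (hcol : ∀ j, ∑ i, B i j = 1)
    (hrow : ∀ j, δ ≤ B i₀ j) (v : Fin m → ℝ) (hv : ∑ j, v j = 0) :
    ∑ i, |B.mulVec v i| ≤ (1 - δ) * ∑ j, |v j| := by
  set B' : Matrix (Fin m) (Fin m) ℝ := fun i j => B i j - if i = i₀ then δ else 0 with hB'
  have hBv : B.mulVec v = B'.mulVec v := by
    funext i
    simp only [Matrix.mulVec, dotProduct, hB']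
    rw [eq_comm]
    simp only [sub_mul, Finset.sum_sub_distrib]
    have : ∑ j, (if i = i₀ then δ else 0) * v j = 0 := by
      rw [← Finset.mul_sum, hv, mul_zero]
    rw [this, sub_zero]
  rw [hBv]
  refine l1_mulVec_le B' (1 - δ) (fun i j => ?_) (fun j => ?_) v
  · by_cases h : i = i₀ <;> simp [hB', h, hB i j, sub_nonneg.2 (hrow j)]
  · simp only [hB', Finset.sum_sub_distrib, hcol j, Finset.sum_ite_eq' Finset.univ i₀ (fun _ => δ)]
    simp

end Aux

section TM
variable (m : ℕ) (a : ℝ) (q : Fin m → ℝ)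

lemma tm_nonneg (ha : a ∈ Set.Ioo (0:ℝ) 1) (hq : ∀ i, q i ∈ Set.Icc (0:ℝ) 1) :
    ∀ i j, 0 ≤ transMatrix m a q i j := by
  intro i j
  unfold transMatrix
  have h1 : (0:ℝ) ≤ 1 - a := by linarith [ha.2]
  have h2 := (hq i).1
  have h3 : (0:ℝ) < a := ha.1
  split <;> split <;> split <;> nlinarith

lemma tm_colsum (ha : a ∈ Set.Ioo (0:ℝ) 1) (hqsum : ∑ i, q i = 1) :
    ∀ j, ∑ i, transMatrix m a q i j = 1 := by
  intro j
  unfold transMatrix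
  simp only [Finset.sum_add_distrib]
  have h1 : ∑ i, (if (j:ℕ) = 0 then q i * (1-a) else 0)
      = if (j:ℕ) = 0 then 1 - a else 0 := by
    by_cases h : (j:ℕ) = 0
    · simp [h, ← Finset.sum_mul, hqsum]
    · simp [h]
  have h2 : ∑ i : Fin m, (if i = j then a else 0) = a := by
    simp [Finset.sum_ite_eq' Finset.univ j (fun _ => a)]
  have h3 : ∑ i : Fin m, (if (j:ℕ) = (i:ℕ) + 1 then (1-a) else 0)
      = if (j:ℕ) = 0 then 0 else 1 - a := by
    by_cases h : (j:ℕ) = 0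
    · simp only [h, if_pos]
      refine Finset.sum_eq_zero fun i _ => if_neg (by omega)
    · have hj1 : (j:ℕ) - 1 < m := by omega
      rw [Finset.sum_eq_single ⟨(j:ℕ) - 1, hj1⟩]
      · rw [if_neg h, if_pos (show (j:ℕ) = (j:ℕ) - 1 + 1 by omega)]
      · intro i _ hi
        rw [if_neg]
        intro hc
        exact hi (Fin.ext (show (i:ℕ) = (j:ℕ) - 1 by omega))
      · simp
  rw [h1, h2, h3]
  by_cases h : (j:ℕ) = 0 <;> simp [h] <;> ring
end TM

section TM2
variable {m : ℕ} {a : ℝ} {q : Fin m → ℝ}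

lemma tm_mulVec (hm : 1 ≤ m) (f : Fin m → ℝ) (i : Fin m) :
    (transMatrix m a q).mulVec f i
      = q i * (1 - a) * f ⟨0, hm⟩ + a * f i
        + (if h : (i:ℕ) + 1 < m then (1 - a) * f ⟨(i:ℕ)+1, h⟩ else 0) := by
  simp only [Matrix.mulVec, dotProduct, transMatrix]
  simp only [add_mul, Finset.sum_add_distrib]
  congr 1
  · congr 1
    · rw [Finset.sum_eq_single (⟨0, hm⟩ : Fin m)]
      · simp
      · intro j _ hj
        rw [if_neg, zero_mul]
        exact fun hc => hj (Fin.ext hc)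
      · simp
    · rw [Finset.sum_eq_single i]
      · simp
      · intro j _ hj
        rw [if_neg (fun hc => hj hc.symm), zero_mul]
      · simp
  · by_cases h : (i:ℕ) + 1 < m
    · rw [dif_pos h, Finset.sum_eq_single (⟨(i:ℕ)+1, h⟩ : Fin m)]
      · rw [if_pos rfl]
      · intro j _ hj
        rw [if_neg, zero_mul]
        exact fun hc => hj (Fin.ext hc)
      · simp
    · rw [dif_neg h]
      refine Finset.sum_eq_zero fun j _ => ?_
      rw [if_neg (fun hc => h (by rw [← hc]; exact j.isLt)), zero_mul]

lemma tailQ_zero (hm : 1 ≤ m) (hqsum : ∑ i, q i = 1) : tailQ m q ⟨0, hm⟩ = 1 := by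
  unfold tailQ
  rw [← hqsum]
  apply Finset.sum_congr _ (fun _ _ => rfl)
  ext j
  simp [Fin.le_def]

lemma tailQ_nonneg (hq : ∀ i, q i ∈ Set.Icc (0:ℝ) 1) (s : Fin m) : 0 ≤ tailQ m q s :=
  Finset.sum_nonneg fun j _ => (hq j).1

lemma tailQ_succ (s : Fin m) (h : (s:ℕ) + 1 < m) :
    tailQ m q s = q s + tailQ m q ⟨(s:ℕ)+1, h⟩ := by
  unfold tailQ
  rw [show Finset.Ici s = insert s (Finset.Ici (⟨(s:ℕ)+1, h⟩ : Fin m)) by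
    ext j
    simp only [Finset.mem_Ici, Finset.mem_insert, Fin.le_def, Fin.ext_iff, Fin.val_mk]
    omega]
  rw [Finset.sum_insert (by
    simp only [Finset.mem_Ici, Fin.le_def, Fin.val_mk]
    omega)]

lemma tailQ_last (s : Fin m) (h : ¬ ((s:ℕ) + 1 < m)) : tailQ m q s = q s := by
  unfold tailQ
  rw [show Finset.Ici s = {s} by
    ext j
    simp only [Finset.mem_Ici, Finset.mem_singleton, Fin.le_def, Fin.ext_iff]
    omega]
  simp

lemma tm_stationary (hm : 1 ≤ m) (ha : a ∈ Set.Ioo (0:ℝ) 1) (hqsum : ∑ i, q i = 1) :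
    (transMatrix m a q).mulVec (fun s => tailQ m q s / ∑ s', tailQ m q s')
      = fun s => tailQ m q s / ∑ s', tailQ m q s' := by
  funext i
  rw [tm_mulVec hm]
  rw [tailQ_zero hm hqsum]
  by_cases h : (i:ℕ) + 1 < m
  · rw [dif_pos h]
    rw [show tailQ m q i = q i + tailQ m q ⟨(i:ℕ)+1, h⟩ from tailQ_succ i h]
    ring
  · rw [dif_neg h, tailQ_last i h]
    ring

end TM2

section Pow
variable {m : ℕ}

lemma pow_entry_nonneg (B : Matrix (Fin m) (Fin m) ℝ) (hB : ∀ i j, 0 ≤ B i j) :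
    ∀ n i j, 0 ≤ (B^n) i j := by
  intro n
  induction n with
  | zero =>
    intro i j
    rw [pow_zero]
    by_cases h : i = j <;> simp [Matrix.one_apply, h]
  | succ n ih =>
    intro i j
    rw [pow_succ, Matrix.mul_apply]
    exact Finset.sum_nonneg fun k _ => mul_nonneg (ih i k) (hB k j)

lemma pow_colsum (B : Matrix (Fin m) (Fin m) ℝ) (hcol : ∀ j, ∑ i, B i j = 1) :
    ∀ n j, ∑ i, (B^n) i j = 1 := by
  intro n
  induction n with
  | zero => intro j; simp [Matrix.one_apply]
  | succ n ih =>
    intro j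
    rw [pow_succ']
    simp only [Matrix.mul_apply]
    rw [Finset.sum_comm]
    calc ∑ k, ∑ i, B i k * (B^n) k j = ∑ k, (∑ i, B i k) * (B^n) k j := by
          simp [Finset.sum_mul]
      _ = ∑ k, (B^n) k j := by
          refine Finset.sum_congr rfl fun k _ => by rw [hcol k, one_mul]
      _ = 1 := ih j

end Pow

section RowLB
variable {m : ℕ} {a : ℝ} {q : Fin m → ℝ}

lemma tm_row_lb (hm : 1 ≤ m) (ha : a ∈ Set.Ioo (0:ℝ) 1) (hq : ∀ i, q i ∈ Set.Icc (0:ℝ) 1) :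
    ∀ k, ∀ j : Fin m, (j:ℕ) ≤ k →
      (min a (1-a))^k ≤ ((transMatrix m a q)^k) ⟨0, hm⟩ j := by
  have hc0 : 0 ≤ min a (1-a) := le_min ha.1.le (by linarith [ha.2])
  intro k
  induction k with
  | zero =>
    intro j hj
    have hj0 : j = ⟨0, hm⟩ := Fin.ext (Nat.le_zero.mp hj)
    rw [hj0, pow_zero]
    simp [Matrix.one_apply]
  | succ k ih =>
    intro j hj
    rw [show ((transMatrix m a q)^(k+1)) = (transMatrix m a q)^k * transMatrix m a q
      from pow_succ _ k, Matrix.mul_apply]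
    have hterm : ∀ l ∈ Finset.univ, 0 ≤ ((transMatrix m a q)^k) ⟨0, hm⟩ l * transMatrix m a q l j :=
      fun l _ => mul_nonneg (pow_entry_nonneg _ (tm_nonneg m a q ha hq) k _ l)
        (tm_nonneg m a q ha hq l j)
    by_cases hjk : (j:ℕ) ≤ k
    · have hAjj : a ≤ transMatrix m a q j j := by
        simp only [transMatrix]
        rw [if_neg (show ¬((j:ℕ) = (j:ℕ) + 1) by omega)]
        have := (hq j).1
        split_ifs <;> nlinarith [ha.2]
      have h1 : (min a (1-a))^(k+1) ≤ ((transMatrix m a q)^k) ⟨0, hm⟩ j * transMatrix m a q j j := by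
        rw [pow_succ]
        exact mul_le_mul (ih j hjk) ((min_le_left _ _).trans hAjj) hc0
          (pow_entry_nonneg _ (tm_nonneg m a q ha hq) k _ j)
      exact h1.trans (Finset.single_le_sum hterm (Finset.mem_univ j))
    · have hjk' : (j:ℕ) = k + 1 := by omega
      have hkm : k < m := by omega
      have hAlj : (1-a) ≤ transMatrix m a q ⟨k, hkm⟩ j := by
        simp only [transMatrix]
        rw [if_pos (show (j:ℕ) = k + 1 from hjk')]
        have := (hq (⟨k, hkm⟩ : Fin m)).1
        split_ifs <;> nlinarith [ha.1, ha.2]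
      have h1 : (min a (1-a))^(k+1)
          ≤ ((transMatrix m a q)^k) ⟨0, hm⟩ ⟨k, hkm⟩ * transMatrix m a q ⟨k, hkm⟩ j := by
        rw [pow_succ]
        exact mul_le_mul (ih ⟨k, hkm⟩ (le_refl k)) ((min_le_right _ _).trans hAlj) hc0
          (pow_entry_nonneg _ (tm_nonneg m a q ha hq) k _ _)
      exact h1.trans (Finset.single_le_sum hterm (Finset.mem_univ (⟨k, hkm⟩ : Fin m)))

end RowLB


/-- If `q_m > 0`, the stationary distribution `f_∞` is a global attractor of
the dynamics `f_{t+1} = A f_t` on the simplex: for every probability vector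
`f₀`, `A^t f₀ → f_∞` as `t → ∞`. -/
theorem stmt7 (m : ℕ) (hm : 1 ≤ m) (a : ℝ) (ha : a ∈ Set.Ioo (0 : ℝ) 1)
    (q : Fin m → ℝ) (hq : ∀ i, q i ∈ Set.Icc (0 : ℝ) 1) (hqsum : ∑ i, q i = 1)
    (hqm : 0 < q ⟨m - 1, by omega⟩) :
    ∀ f₀ : Fin m → ℝ, (∀ i, 0 ≤ f₀ i) → ∑ i, f₀ i = 1 →
      Filter.Tendsto (fun t : ℕ => ((transMatrix m a q) ^ t).mulVec f₀)
        Filter.atTop (nhds (fun s => tailQ m q s / ∑ s', tailQ m q s')) := by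
  intro f₀ hf₀ hf₀sum
  set A := transMatrix m a q with hA
  set Z := ∑ s', tailQ m q s' with hZ
  set fi : Fin m → ℝ := fun s => tailQ m q s / Z with hfi
  have hAnn : ∀ i j, 0 ≤ A i j := tm_nonneg m a q ha hq
  have hAcs : ∀ j, ∑ i, A i j = 1 := tm_colsum m a q ha hqsum
  have hZpos : 0 < Z := by
    rw [hZ]
    refine Finset.sum_pos' (fun s _ => tailQ_nonneg hq s) ⟨⟨0, hm⟩, Finset.mem_univ _, ?_⟩
    rw [tailQ_zero hm hqsum]; norm_num
  have hfisum : ∑ s, fi s = 1 := by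
    simp only [hfi]
    rw [← Finset.sum_div, ← hZ, div_self hZpos.ne']
  have hstat : A.mulVec fi = fi := tm_stationary hm ha hqsum
  have hstatpow : ∀ t, (A^t).mulVec fi = fi := by
    intro t
    induction t with
    | zero => rw [pow_zero, Matrix.one_mulVec]
    | succ t ih => rw [pow_succ', ← Matrix.mulVec_mulVec, ih, hstat]
  set w : Fin m → ℝ := fun i => f₀ i - fi i with hw
  set v : ℕ → Fin m → ℝ := fun t => (A^t).mulVec w with hv
  set N : ℕ → ℝ := fun t => ∑ i, |v t i| with hN
  have hwsum : ∑ i, w i = 0 := by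
    simp only [hw, Finset.sum_sub_distrib, hf₀sum, hfisum, sub_self]
  have hvsum : ∀ t, ∑ i, v t i = 0 := fun t => by
    rw [hv]
    simp only []
    rw [colsum_mulVec _ (pow_colsum A hAcs t) w, hwsum]
  have hvsucc : ∀ t, v (t+1) = A.mulVec (v t) := by
    intro t
    simp only [hv]
    rw [pow_succ', ← Matrix.mulVec_mulVec]
  have hstep : ∀ t, N (t+1) ≤ N t := by
    intro t
    simp only [hN]
    rw [hvsucc t]
    have := l1_mulVec_le A 1 hAnn (fun j => le_of_eq (hAcs j)) (v t)
    linarith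
  have hmono : ∀ s t, s ≤ t → N t ≤ N s := by
    intro s t h
    induction t, h using Nat.le_induction with
    | base => exact le_refl _
    | succ t ht ih => exact (hstep t).trans ih
  set c : ℝ := min a (1-a) with hc
  have hc0 : 0 < c := lt_min ha.1 (by linarith [ha.2])
  have hc1 : c ≤ 1 := (min_le_left _ _).trans ha.2.le
  set δ : ℝ := c^m with hδ
  have hδ0 : 0 < δ := pow_pos hc0 m
  have hδ1 : δ ≤ 1 := pow_le_one₀ hc0.le hc1
  set r : ℝ := 1 - δ with hr
  have hr0 : 0 ≤ r := by linarith
  have hr1 : r < 1 := by linarith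
  have hrowlb : ∀ j, δ ≤ (A^m) ⟨0, hm⟩ j :=
    fun j => tm_row_lb hm ha hq m j (le_of_lt j.isLt)
  have hcontr : ∀ t, N (t+m) ≤ r * N t := by
    intro t
    have hvm : v (t+m) = (A^m).mulVec (v t) := by
      simp only [hv]
      rw [show t + m = m + t by omega, pow_add, ← Matrix.mulVec_mulVec]
    simp only [hN]
    rw [hvm]
    exact doeblin (A^m) δ ⟨0, hm⟩ (pow_entry_nonneg A hAnn m) (pow_colsum A hAcs m)
      hrowlb (v t) (hvsum t)
  have hbound : ∀ k, N (k*m) ≤ r^k * N 0 := by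
    intro k
    induction k with
    | zero => simp
    | succ k ih =>
      have : N (k*m + m) ≤ r * N (k*m) := hcontr (k*m)
      calc N ((k+1)*m) = N (k*m + m) := by ring_nf
        _ ≤ r * N (k*m) := this
        _ ≤ r * (r^k * N 0) := mul_le_mul_of_nonneg_left ih hr0
        _ = r^(k+1) * N 0 := by ring
  have hNfinal : ∀ t, N t ≤ r^(t/m) * N 0 := by
    intro t
    exact (hmono _ t (Nat.div_mul_le_self t m)).trans (hbound (t/m))
  have hg : Filter.Tendsto (fun t : ℕ => r^(t/m) * N 0) Filter.atTop (nhds 0) := by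
    have h1 : Filter.Tendsto (fun k : ℕ => r^k) Filter.atTop (nhds 0) :=
      tendsto_pow_atTop_nhds_zero_of_lt_one hr0 hr1
    have h2 : Filter.Tendsto (fun t : ℕ => t/m) Filter.atTop Filter.atTop :=
      Filter.tendsto_atTop_atTop.mpr fun b =>
        ⟨b*m, fun t ht => (Nat.le_div_iff_mul_le hm).mpr ht⟩
    simpa using (h1.comp h2).mul_const (N 0)
  have hdecomp : ∀ t, (A^t).mulVec f₀ = fun j => fi j + v t j := by
    intro t
    have hsplit : f₀ = fi + w := by funext x; simp [hw]
    rw [hsplit, Matrix.mulVec_add, hstatpow t]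
    rfl
  rw [tendsto_pi_nhds]
  intro i
  have hvlim : Filter.Tendsto (fun t => v t i) Filter.atTop (nhds 0) := by
    apply squeeze_zero_norm _ hg
    intro t
    rw [Real.norm_eq_abs]
    exact (Finset.single_le_sum (fun j _ => abs_nonneg (v t j)) (Finset.mem_univ i)).trans
      (hNfinal t)
  have : Filter.Tendsto (fun t => fi i + v t i) Filter.atTop (nhds (fi i)) := by
    simpa using tendsto_const_nhds.add hvlim
  refine this.congr' ?_
  filter_upwards with t
  rw [hdecomp t]
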